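/- Weight-preserving reconstruction: if the output alphabet is A = (Fin 2)^n and (s, a) ∈ TBP(σᵢ) is a tail-biting path of length N whose output Hamming weight is d, then there exist 0 ≤ k < N and a finite sequence of elements of IEE(σᵢ), with lengths summing to N and output Hamming weights summing to d, whose concatenation equals the cyclic shift of (s, a) by k. -/

import Mathlib

/-- A finite path through the trellis: a length `len`, a state sequence
`st 0, …, st len`, and an output sequence `out 0, …, out (len - 1)`. -/
structure NPath (S A : Type*) where
  len : ℕ
  st : ℕ → S
  out : ℕ → A

/-- Concatenation of a path ending at some state with a path starting at that
state: state sequences are joined (dropping the repeated initial state of the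
second path) and output sequences are appended. -/
def pconcat {S A : Type*} (p q : NPath S A) : NPath S A where
  len := p.len + q.len
  st := fun i => if i < p.len then p.st i else q.st (i - p.len)
  out := fun i => if i < p.len then p.out i else q.out (i - p.len)

/-- Concatenation of the nonempty sequence of paths `p :: l`. -/
def concatAll {S A : Type*} (p : NPath S A) (l : List (NPath S A)) : NPath S A :=
  l.foldl pconcat p

/-- Two paths are equal as paths: same length, same states `0, …, len`, and
same outputs `0, …, len - 1`. -/
def PathEq {S A : Type*} (p q : NPath S A) : Prop :=
  p.len = q.len ∧ (∀ i ≤ p.len, p.st i = q.st i) ∧ ∀ i < p.len, p.out i = q.out i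

/-- `(s, a)` satisfies the trellis transition constraint for `L` steps. -/
def IsTrellisPath {S A : Type*} (E : Set (S × A × S)) (L : ℕ)
    (s : ℕ → S) (a : ℕ → A) : Prop :=
  ∀ i < L, (s i, a i, s (i + 1)) ∈ E

/-- `(s, a)` is a tail-biting path of length `N`. -/
def IsTBPath {S A : Type*} (E : Set (S × A × S)) (N : ℕ)
    (s : ℕ → S) (a : ℕ → A) : Prop :=
  IsTrellisPath E N s a ∧ s 0 = s N

/-- Cyclic shift by `k` of the state sequence: `s'_i = s_{(i+k) mod N}`. -/
def cycShiftS {S : Type*} (N k : ℕ) (s : ℕ → S) : ℕ → S :=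
  fun i => s ((i + k) % N)

/-- Cyclic shift by `k` of the output sequence: `a'_i = a_{(i+k) mod N}`. -/
def cycShiftA {A : Type*} (N k : ℕ) (a : ℕ → A) : ℕ → A :=
  fun i => a ((i + k) % N)

/-- `(s, a)` belongs to `TBP(σᵢ)`: it is a tail-biting path of length `N` that
traverses `σᵢ` and avoids `σ_0, …, σ_{i-1}`. -/
def InTBP {S A : Type*} {M : ℕ} (E : Set (S × A × S)) (σ : Fin M → S) (i : Fin M)
    (N : ℕ) (s : ℕ → S) (a : ℕ → A) : Prop :=
  IsTBPath E N s a ∧ (∃ j ≤ N, s j = σ i) ∧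
    ∀ j ≤ N, ∀ i' : Fin M, i' < i → s j ≠ σ i'

/-- `p` is an irreducible error event at `σᵢ` (of some length `j ≥ 1`): it
satisfies the trellis constraint, starts and ends at `σᵢ`, and its interior
states avoid `σ_0, σ_1, …, σᵢ`. -/
def InIEE {S A : Type*} {M : ℕ} (E : Set (S × A × S)) (σ : Fin M → S) (i : Fin M)
    (p : NPath S A) : Prop :=
  1 ≤ p.len ∧
    (∀ l < p.len, (p.st l, p.out l, p.st (l + 1)) ∈ E) ∧
    p.st 0 = σ i ∧ p.st p.len = σ i ∧
    ∀ j', 0 < j' → j' < p.len → ∀ i' : Fin M, i' ≤ i → p.st j' ≠ σ i'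

/-- The output Hamming weight of the first `L` outputs: the total number of
nonzero bits among `a_0, …, a_{L−1} ∈ (Fin 2)^n`. -/
def outWeight (n L : ℕ) (a : ℕ → (Fin n → Fin 2)) : ℕ :=
  ∑ i ∈ Finset.range L, (Finset.univ.filter fun t : Fin n => a i t ≠ 0).card

lemma pconcat_assoc {S A : Type*} (p q r : NPath S A) :
    pconcat (pconcat p q) r = pconcat p (pconcat q r) := by
  unfold pconcat
  simp only [NPath.mk.injEq]
  refine ⟨by ring, funext fun i => ?_, funext fun i => ?_⟩ <;>
  · rcases lt_or_ge i p.len with h1 | h1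
    · rw [if_pos (by omega : i < p.len + q.len), if_pos h1, if_pos h1]
    · rcases lt_or_ge i (p.len + q.len) with h2 | h2
      · rw [if_pos h2, if_neg (not_lt.mpr h1), if_neg (not_lt.mpr h1),
          if_pos (by omega : i - p.len < q.len)]
      · rw [if_neg (not_lt.mpr h2), if_neg (not_lt.mpr h1),
          if_neg (by omega : ¬ i - p.len < q.len)]
        congr 1
        omega

lemma concatAll_cons {S A : Type*} (p q : NPath S A) (l : List (NPath S A)) :
    concatAll p (q :: l) = pconcat p (concatAll q l) := by
  induction l generalizing p q with
  | nil => rfl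
  | cons r l ih =>
    show concatAll (pconcat p q) (r :: l) = _
    rw [ih, pconcat_assoc, ← ih]

lemma outWeight_split (n t u : ℕ) (a : ℕ → (Fin n → Fin 2)) :
    outWeight n (t + u) a = outWeight n t a + outWeight n u (fun j => a (j + t)) := by
  unfold outWeight
  rw [Finset.sum_range_add]
  congr 1
  exact Finset.sum_congr rfl fun j _ => by rw [Nat.add_comm t j]

lemma sum_range_shift {β : Type*} [AddCommMonoid β] (N k : ℕ) (hk : k < N) (f : ℕ → β) :
    ∑ i ∈ Finset.range N, f ((i + k) % N) = ∑ i ∈ Finset.range N, f i := by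
  refine Finset.sum_nbij' (fun m => (m + k) % N) (fun m => (m + (N - k)) % N) ?_ ?_ ?_ ?_ ?_
  · intro m _
    exact Finset.mem_range.mpr (Nat.mod_lt _ (by omega))
  · intro m _
    exact Finset.mem_range.mpr (Nat.mod_lt _ (by omega))
  · intro m hm
    simp only [Finset.mem_range] at hm
    show ((m + k) % N + (N - k)) % N = m
    rw [Nat.mod_add_mod, show m + k + (N - k) = m + N from by omega,
      Nat.add_mod_right, Nat.mod_eq_of_lt hm]
  · intro m hm
    simp only [Finset.mem_range] at hm
    show ((m + (N - k)) % N + k) % N = m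
    rw [Nat.mod_add_mod, show m + (N - k) + k = m + N from by omega,
      Nat.add_mod_right, Nat.mod_eq_of_lt hm]
  · intro m _
    rfl

lemma decompose {S : Type*} {M n : ℕ} (E : Set (S × (Fin n → Fin 2) × S))
    (σ : Fin M → S) (i : Fin M) :
    ∀ L, 1 ≤ L → ∀ (s : ℕ → S) (a : ℕ → (Fin n → Fin 2)),
    IsTrellisPath E L s a → s 0 = σ i → s L = σ i →
    (∀ j ≤ L, ∀ i' : Fin M, i' < i → s j ≠ σ i') →
    ∃ (p : NPath S (Fin n → Fin 2)) (l : List (NPath S (Fin n → Fin 2))),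
      (∀ q ∈ p :: l, InIEE E σ i q) ∧
      p.len + (l.map NPath.len).sum = L ∧
      outWeight n p.len p.out + (l.map fun q => outWeight n q.len q.out).sum
        = outWeight n L a ∧
      PathEq (concatAll p l) ⟨L, s, a⟩ := by
  intro L
  induction L using Nat.strong_induction_on with
  | _ L ih =>
    intro hL s a htr h0 hLσ havoid
    classical
    have hex : ∃ t, 0 < t ∧ t ≤ L ∧ s t = σ i := ⟨L, hL, le_refl L, hLσ⟩
    set t := Nat.find hex with ht
    obtain ⟨ht0, htL, htσ⟩ := Nat.find_spec hex
    set p₁ : NPath S (Fin n → Fin 2) := ⟨t, s, a⟩ with hp₁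
    have hIEE₁ : InIEE E σ i p₁ := by
      refine ⟨ht0, fun l hl => htr l (lt_of_lt_of_le hl htL), h0, htσ, ?_⟩
      intro j' hj'0 hj't i' hi' hcon
      rcases lt_or_eq_of_le hi' with hlt | heq
      · exact havoid j' (le_trans (le_of_lt hj't) htL) i' hlt hcon
      · exact Nat.find_min hex hj't ⟨hj'0, le_trans (le_of_lt hj't) htL, heq ▸ hcon⟩
    rcases eq_or_lt_of_le htL with hteq | htlt
    · refine ⟨p₁, [], ?_, ?_, ?_, ?_⟩
      · intro q hq
        rcases List.mem_cons.mp hq with rfl | hq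
        · exact hIEE₁
        · simp at hq
      · simpa using hteq
      · show outWeight n t a + 0 = outWeight n L a
        rw [show t = L from hteq, Nat.add_zero]
      · exact ⟨hteq, fun j _ => rfl, fun j _ => rfl⟩
    · -- recurse on the tail
      have h1t : 1 ≤ L - t := by omega
      obtain ⟨p', l', hIEE', hlen', hwt', hpe'⟩ :=
        ih (L - t) (by omega) h1t (fun j => s (j + t)) (fun j => a (j + t))
          (fun j hj => by
            have := htr (j + t) (by omega)
            simpa [Nat.add_right_comm] using this)
          (by simpa using htσ)
          (by show s (L - t + t) = σ i; rw [Nat.sub_add_cancel htL]; exact hLσ)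
          (fun j hj i' hi' => havoid (j + t) (by omega) i' hi')
      refine ⟨p₁, p' :: l', ?_, ?_, ?_, ?_⟩
      · intro q hq
        rcases List.mem_cons.mp hq with rfl | hq
        · exact hIEE₁
        · exact hIEE' q hq
      · simp only [List.map_cons, List.sum_cons]
        show t + (p'.len + (l'.map NPath.len).sum) = L
        omega
      · simp only [List.map_cons, List.sum_cons]
        have hsplit := outWeight_split n t (L - t) a
        rw [show t + (L - t) = L from by omega] at hsplit
        show outWeight n t a + _ = _
        omega
      · rw [concatAll_cons]
        obtain ⟨hCl, hCs, hCo⟩ := hpe'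
        set C := concatAll p' l' with hC
        have hClen : C.len = L - t := hCl
        refine ⟨?_, ?_, ?_⟩
        · show t + C.len = L
          omega
        · intro j hj
          show (if j < t then s j else C.st (j - t)) = s j
          rcases lt_or_ge j t with h1 | h1
          · rw [if_pos h1]
          · rw [if_neg (not_lt.mpr h1)]
            have := hCs (j - t) (by have hj' : j ≤ t + C.len := hj; omega)
            simp only at this
            rw [this, Nat.sub_add_cancel h1]
        · intro j hj
          show (if j < t then a j else C.out (j - t)) = a j
          rcases lt_or_ge j t with h1 | h1
          · rw [if_pos h1]
          · rw [if_neg (not_lt.mpr h1)]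
            have := hCo (j - t) (by have hj' : j < t + C.len := hj; omega)
            simp only at this
            rw [this, Nat.sub_add_cancel h1]

/-- Weight-preserving reconstruction: if the output alphabet is `(Fin 2)^n` and
`(s, a) ∈ TBP(σᵢ)` is a tail-biting path of length `N` whose output Hamming
weight is `d`, then there exist `0 ≤ k < N` and a finite nonempty sequence of
elements of `IEE(σᵢ)`, with lengths summing to `N` and output Hamming weights
summing to `d`, whose concatenation equals the cyclic shift of `(s, a)` by `k`. -/
theorem weight_preserving_reconstruction {S : Type*} {M n : ℕ}
    (E : Set (S × (Fin n → Fin 2) × S)) (σ : Fin M → S) (i : Fin M)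
    (N d : ℕ) (hN : 1 ≤ N) (s : ℕ → S) (a : ℕ → (Fin n → Fin 2))
    (h : InTBP E σ i N s a) (hd : outWeight n N a = d) :
    ∃ k < N, ∃ (p : NPath S (Fin n → Fin 2)) (l : List (NPath S (Fin n → Fin 2))),
      (∀ q ∈ p :: l, InIEE E σ i q) ∧
      p.len + (l.map NPath.len).sum = N ∧
      outWeight n p.len p.out + (l.map fun q => outWeight n q.len q.out).sum = d ∧
      PathEq (concatAll p l) ⟨N, cycShiftS N k s, cycShiftA N k a⟩ := by
  obtain ⟨⟨htr, htb⟩, ⟨j, hjN, hjσ⟩, havoid⟩ := h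
  set k := j % N with hk
  have hkN : k < N := Nat.mod_lt _ (by omega)
  have hkσ : s k = σ i := by
    rcases lt_or_eq_of_le hjN with hlt | heq
    · rw [hk, Nat.mod_eq_of_lt hlt]; exact hjσ
    · rw [hk, heq, Nat.mod_self, htb, ← heq]; exact hjσ
  set s' : ℕ → S := cycShiftS N k s with hs'
  set a' : ℕ → (Fin n → Fin 2) := cycShiftA N k a with ha'
  have hmod : ∀ m, (m + k) % N < N := fun m => Nat.mod_lt _ (by omega)
  have htr' : IsTrellisPath E N s' a' := by
    intro m hm
    have hu := htr ((m + k) % N) (hmod m)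
    have hsucc : s ((m + 1 + k) % N) = s ((m + k) % N + 1) := by
      have h1 : (m + 1 + k) % N = ((m + k) % N + 1) % N := by
        rw [Nat.mod_add_mod]
        congr 1
        omega
      rw [h1]
      rcases lt_or_eq_of_le (Nat.succ_le_of_lt (hmod m)) with hlt | heq
      · rw [Nat.mod_eq_of_lt hlt]
      · have heq' : (m + k) % N + 1 = N := heq
        rw [show ((m + k) % N + 1) % N = 0 from by rw [heq']; exact Nat.mod_self N,
          htb, heq']
    show (s ((m + k) % N), a ((m + k) % N), s ((m + 1 + k) % N)) ∈ E
    rw [hsucc]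
    exact hu
  have h0' : s' 0 = σ i := by
    show s ((0 + k) % N) = σ i
    rw [Nat.zero_add, Nat.mod_eq_of_lt hkN]
    exact hkσ
  have hN' : s' N = σ i := by
    show s ((N + k) % N) = σ i
    rw [Nat.add_comm, Nat.add_mod_right, Nat.mod_eq_of_lt hkN]
    exact hkσ
  have havoid' : ∀ j' ≤ N, ∀ i' : Fin M, i' < i → s' j' ≠ σ i' := by
    intro j' _ i' hi'
    exact havoid ((j' + k) % N) (le_of_lt (hmod j')) i' hi'
  obtain ⟨p, l, hIEE, hlen, hwt, hpe⟩ :=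
    decompose E σ i N hN s' a' htr' h0' hN' havoid'
  refine ⟨k, hkN, p, l, hIEE, hlen, ?_, hpe⟩
  rw [hwt]
  show ∑ m ∈ Finset.range N,
      (Finset.univ.filter fun t : Fin n => a ((m + k) % N) t ≠ 0).card = d
  rw [sum_range_shift N k hkN (fun m => (Finset.univ.filter fun t : Fin n => a m t ≠ 0).card)]
  exact hd
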